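/- Under Assumption 1 with support bound h, every infinite sequential persuasion S = (Ξ_0, φ_1, Ξ_1, …) starting from μ can be represented by an h-branching sequential persuasion B = (C_n, π_n, β_n, η_n)_{n∈ℕ} starting from μ: for every n ∈ ℕ there exists a map r_n: C_n → Ξ_n such that (i) Pr[ξ] = Σ_{c∈C_n} 1[r_n(c) = ξ]·π_n(c) for every ξ ∈ Ξ_n; (ii) last(ξ) = β_n(c) and φ_{n+1}(ξ) = η_n(c) for every ξ ∈ Ξ_n and every c ∈ C_n with r_n(c) = ξ; (iii) for n ≤ n', ξ ∈ Ξ_n is a prefix of ξ' ∈ Ξ_{n'} if and only if for every c' ∈ C_{n'} with r_{n'}(c') = ξ' there exists c ∈ C_n with r_n(c) = ξ that is an ancestor of c'. -/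

import Mathlib

open Filter Topology
open scoped Classical

noncomputable section

/-- Δ(Ω): beliefs, i.e. probability distributions on the finite state space Ω,
as a subspace of Ω → ℝ (its topology agrees with the total-variation one). -/
abbrev Belief (Ω : Type*) [Fintype Ω] :=
  {p : Ω → ℝ // (∀ ω, 0 ≤ p ω) ∧ ∑ ω, p ω = 1}

variable {Ω : Type*} [Fintype Ω]

/-- An element of F₀: a finite-support experiment, i.e. a finitely supported probability
distribution over beliefs (keys are the distinct posteriors p_j, values the positive
weights λ_j). -/
structure SPExp (Ω : Type*) [Fintype Ω] where
  w : Belief Ω →₀ ℝ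
  nonneg : ∀ p, 0 ≤ w p
  sum_one : ∑ p ∈ w.support, w p = 1

namespace SPExp

/-- τ(e): the support of an experiment. -/
def tau (e : SPExp Ω) : Finset (Belief Ω) := e.w.support

/-- Expectation of a real-valued function under an experiment. -/
def expect (e : SPExp Ω) (f : Belief Ω → ℝ) : ℝ := ∑ p ∈ e.w.support, e.w p * f p

/-- σ(e): the barycenter (expectation) of an experiment. -/
def sigma (e : SPExp Ω) : Belief Ω :=
  ⟨fun ω => ∑ p ∈ e.w.support, e.w p * p.val ω,
   fun ω => Finset.sum_nonneg fun p _ => mul_nonneg (e.nonneg p) (p.2.1 ω),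
   by
     calc ∑ ω, ∑ p ∈ e.w.support, e.w p * p.val ω
         = ∑ p ∈ e.w.support, ∑ ω, e.w p * p.val ω := Finset.sum_comm
       _ = ∑ p ∈ e.w.support, e.w p * ∑ ω, p.val ω := by
           refine Finset.sum_congr rfl fun p _ => ?_
           rw [Finset.mul_sum]
       _ = ∑ p ∈ e.w.support, e.w p := by
           refine Finset.sum_congr rfl fun p _ => ?_
           rw [p.2.2, mul_one]
       _ = 1 := e.sum_one⟩

/-- The trivial experiment (1, p). -/
def triv (p : Belief Ω) : SPExp Ω where
  w := Finsupp.single p 1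
  nonneg := fun q => by
    rw [Finsupp.single_apply]
    split <;> norm_num
  sum_one := by
    rw [Finsupp.support_single_ne_zero _ one_ne_zero]
    simp

end SPExp

/-- T: the set of trivial experiments. -/
def Trivials (Ω : Type*) [Fintype Ω] : Set (SPExp Ω) := Set.range SPExp.triv

/-- Weak convergence of experiments, viewed as Borel probability measures on Δ(Ω). -/
def WeakTendsto (es : ℕ → SPExp Ω) (e : SPExp Ω) : Prop :=
  ∀ f : Belief Ω → ℝ, Continuous f →
    Tendsto (fun i => (es i).expect f) atTop (𝓝 (e.expect f))

/-- Convergence of beliefs in total variation. -/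
def TVTendsto (ps : ℕ → Belief Ω) (p : Belief Ω) : Prop :=
  Tendsto (fun i => ∑ ω, |(ps i).val ω - p.val ω|) atTop (𝓝 0)

/-- Histories, most recent step first: entries are (experiment taken, realized posterior);
the starting belief is kept separately. -/
abbrev Hist (Ω : Type*) [Fintype Ω] := List (SPExp Ω × Belief Ω)

/-- last(ξ): the current belief after history ξ started at μ. -/
def lastBelief (μ : Belief Ω) : Hist Ω → Belief Ω
  | [] => μ
  | (_, p) :: _ => p

/-- Pr[ξ]: the probability of a history. -/
def histProb : Hist Ω → ℝ
  | [] => 1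
  | (e, p) :: ξ => e.w p * histProb ξ

/-- A sequential persuasion starting from μ with feasible experiments F, given by its
history-dependent choice of the next (feasible, Bayes-plausible) experiment.  An n-step
sequential persuasion is such a strategy used for n steps; an infinite sequential
persuasion is the strategy itself. -/
structure SeqP {Ω : Type*} [Fintype Ω] (F : Set (SPExp Ω)) (μ : Belief Ω) where
  next : Hist Ω → SPExp Ω
  feasible : ∀ ξ, next ξ ∈ F
  bayes : ∀ ξ, (next ξ).sigma = lastBelief μ ξ

variable {F : Set (SPExp Ω)} {μ : Belief Ω}

/-- Expectation of g over the n-step histories of S extending ξ. -/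
def histExp (S : SeqP F μ) (g : Hist Ω → ℝ) : ℕ → Hist Ω → ℝ
  | 0, ξ => g ξ
  | n + 1, ξ => (S.next ξ).expect fun p => histExp S g n ((S.next ξ, p) :: ξ)

/-- Ξ_n: the set of n-step histories of S. -/
def Hists (S : SeqP F μ) : ℕ → Set (Hist Ω)
  | 0 => {[]}
  | n + 1 => {ξ' | ∃ ξ ∈ Hists S n, ∃ p ∈ (S.next ξ).tau, ξ' = (S.next ξ, p) :: ξ}

/-- ξ padded by l trivial steps. -/
def padHist (μ : Belief Ω) (ξ : Hist Ω) (l : ℕ) : Hist Ω :=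
  List.replicate l (SPExp.triv (lastBelief μ ξ), lastBelief μ ξ) ++ ξ

/-- S terminates after ξ: all subsequent choices (along trivial continuations of ξ)
are the trivial experiment. -/
def TerminatesAfter (S : SeqP F μ) (ξ : Hist Ω) : Prop :=
  ∀ l : ℕ, S.next (padHist μ ξ l) = SPExp.triv (lastBelief μ ξ)

/-- 𝒱(S⁽ⁿ⁾) = E[v(b_n)], the expected utility of the n-step persuasion given by the
first n steps of S. -/
def stepUtility (v : Belief Ω → ℝ) (S : SeqP F μ) (n : ℕ) : ℝ :=
  histExp S (fun ξ => v (lastBelief μ ξ)) n []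

/-- Pr[S terminates after n steps]. -/
def termProb (S : SeqP F μ) (n : ℕ) : ℝ :=
  histExp S (fun ξ => if TerminatesAfter S ξ then 1 else 0) n []

/-- 𝒱(S) for an infinite sequential persuasion S. -/
def infUtility (v : Belief Ω → ℝ) (S : SeqP F μ) : ℝ :=
  ⨆ n : ℕ, histExp S (fun ξ => if TerminatesAfter S ξ then v (lastBelief μ ξ) else 0) n []

/-- Pr[b_n ∈ O] for the belief b_n induced by S after n steps. -/
def massIn (S : SeqP F μ) (O : Set (Belief Ω)) (n : ℕ) : ℝ :=
  histExp S (fun ξ => if lastBelief μ ξ ∈ O then 1 else 0) n []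

/-- v_n(p): the optimal value over n-step sequential persuasions starting from p. -/
def vN (F : Set (SPExp Ω)) (v : Belief Ω → ℝ) (n : ℕ) (p : Belief Ω) : ℝ :=
  ⨆ S : SeqP F p, stepUtility v S n

/-- v_∞(p): the optimal value over infinite sequential persuasions starting from p. -/
def vInf (F : Set (SPExp Ω)) (v : Belief Ω → ℝ) (p : Belief Ω) : ℝ :=
  ⨆ S : SeqP F p, infUtility v S

/-- Assumption 1: a uniform support bound h, and weak closedness of F. -/
def Assumption1 (F : Set (SPExp Ω)) (h : ℕ) : Prop :=
  (∀ e ∈ F, e.tau.card ≤ h) ∧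
  ∀ es : ℕ → SPExp Ω, (∀ i, es i ∈ F) → ∀ e : SPExp Ω, WeakTendsto es e → e ∈ F

/-- Shannon entropy of a belief. -/
def entropy (p : Belief Ω) : ℝ := -∑ ω, p.val ω * Real.log (p.val ω)

/-- Assumption 2: every nontrivial feasible experiment lowers expected entropy by δ. -/
def Assumption2 (F : Set (SPExp Ω)) (δ : ℝ) : Prop :=
  ∀ e ∈ F \ Trivials Ω, e.expect entropy ≤ entropy e.sigma - δ

/-- S is (effectively) an n-step sequential persuasion: after n steps it only takes
trivial experiments. -/
def IsNStep (S : SeqP F μ) (n : ℕ) : Prop :=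
  ∀ ξ : Hist Ω, n ≤ ξ.length → S.next ξ = SPExp.triv (lastBelief μ ξ)

/-- Assumption 3 at prior μ: a sequence of finite-step sequential persuasions whose
values tend to v_∞(μ) and which terminate at a uniform rate. -/
def Assumption3 (F : Set (SPExp Ω)) (v : Belief Ω → ℝ) (μ : Belief Ω) : Prop :=
  ∃ (nk : ℕ → ℕ) (Sk : ℕ → SeqP F μ),
    (∀ k, IsNStep (Sk k) (nk k)) ∧
    Tendsto (fun k => stepUtility v (Sk k) (nk k)) atTop (𝓝 (vInf F v μ)) ∧
    ∀ ε : ℝ, 0 < ε → ∃ N : ℕ, ∀ k, N ≤ nk k → 1 - ε ≤ termProb (Sk k) N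

/-- v̂: the concave closure of v (the value of unconstrained Bayesian persuasion). -/
def concaveClosure (v : Belief Ω → ℝ) (p : Belief Ω) : ℝ :=
  sSup {x : ℝ | ∃ e : SPExp Ω, e.sigma = p ∧ x = e.expect v}

/-- O is implementable for (μ, F). -/
def Implementable (F : Set (SPExp Ω)) (μ : Belief Ω) (O : Set (Belief Ω)) : Prop :=
  ∀ ε : ℝ, 0 < ε → ∃ (n : ℕ) (S : SeqP F μ), 1 - ε < massIn S O n

/-- S is a Markov sequential persuasion compatible with (μ, D, Z, ρ). -/
def MarkovCompatible (S : SeqP F μ) (D Z : Set (Belief Ω)) (ρ : Belief Ω → SPExp Ω) : Prop :=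
  ∀ ξ : Hist Ω,
    (lastBelief μ ξ ∈ D → S.next ξ = ρ (lastBelief μ ξ)) ∧
    (lastBelief μ ξ ∈ Z → S.next ξ = SPExp.triv (lastBelief μ ξ))

/-- The j-th child of vertex m at depth n of the infinite h-ary tree. -/
def treeChild {h n : ℕ} (m : Fin (h ^ n)) (j : Fin h) : Fin (h ^ (n + 1)) :=
  ⟨m.val * h + j.val, by
    have h1 : m.val + 1 ≤ h ^ n := m.isLt
    have h2 : j.val < h := j.isLt
    calc m.val * h + j.val < m.val * h + h := by omega
      _ = (m.val + 1) * h := by ring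
      _ ≤ h ^ n * h := Nat.mul_le_mul h1 le_rfl
      _ = h ^ (n + 1) := (pow_succ h n).symm⟩

/-- An h-branching sequential persuasion starting from μ. -/
structure HBranch (Ω : Type*) [Fintype Ω] (F : Set (SPExp Ω)) (h : ℕ) (μ : Belief Ω) where
  π : ∀ n : ℕ, Fin (h ^ n) → ℝ
  β : ∀ n : ℕ, Fin (h ^ n) → Belief Ω
  η : ∀ n : ℕ, Fin (h ^ n) → SPExp Ω
  π_nonneg : ∀ n m, 0 ≤ π n m
  π_sum : ∀ n : ℕ, ∑ m, π n m = 1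
  η_mem : ∀ n m, η n m ∈ F
  β_root : ∀ m, β 0 m = μ
  compat_sigma : ∀ n m, (η n m).sigma = β n m
  compat_tau : ∀ (n : ℕ) (m : Fin (h ^ n)), ∀ p ∈ (η n m).tau,
    ∃ j : Fin h, β (n + 1) (treeChild m j) = p
  consistent : ∀ (n : ℕ) (m : Fin (h ^ n)) (p : Belief Ω),
    (∑ j : Fin h, if β (n + 1) (treeChild m j) = p then π (n + 1) (treeChild m j) else 0)
      = π n m * (η n m).w p

/-- c' (at depth n + l) is a descendant of c (at depth n) in the h-ary tree. -/
def Descendant {h : ℕ} : {n : ℕ} → (l : ℕ) → Fin (h ^ n) → Fin (h ^ (n + l)) → Prop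
  | _, 0, c, c' => c = c'
  | _, l + 1, c, c' => ∃ c'' j, Descendant l c c'' ∧ c' = treeChild c'' j

namespace HBranch

variable {h : ℕ}

/-- B terminates after vertex m at depth n. -/
def TermAfter (B : HBranch Ω F h μ) (n : ℕ) (m : Fin (h ^ n)) : Prop :=
  B.η n m ∈ Trivials Ω ∧
  ∀ (l : ℕ) (c' : Fin (h ^ (n + l))), Descendant l m c' → 0 < B.π (n + l) c' →
    B.η (n + l) c' ∈ Trivials Ω

/-- Pr[B terminates after n steps]. -/
def termProb (B : HBranch Ω F h μ) (n : ℕ) : ℝ :=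
  ∑ m : Fin (h ^ n), if B.TermAfter n m then B.π n m else 0

end HBranch

/-- B represents the infinite sequential persuasion S (via maps r_n : C_n → Ξ_n). -/
def Represents (S : SeqP F μ) {h : ℕ} (B : HBranch Ω F h μ) : Prop :=
  ∃ r : ∀ n : ℕ, Fin (h ^ n) → Hist Ω,
    ∀ n : ℕ,
      (∀ c, r n c ∈ Hists S n) ∧
      (∀ ξ ∈ Hists S n, histProb ξ = ∑ c, if r n c = ξ then B.π n c else 0) ∧
      (∀ c, lastBelief μ (r n c) = B.β n c ∧ S.next (r n c) = B.η n c) ∧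
      (∀ l : ℕ, ∀ ξ ∈ Hists S n, ∀ ξ' ∈ Hists S (n + l),
        (ξ <:+ ξ' ↔
          ∀ c' : Fin (h ^ (n + l)), r (n + l) c' = ξ' →
            ∃ c : Fin (h ^ n), r n c = ξ ∧ Descendant l c c'))

/-- The number of nontrivial experiments taken along a history. -/
def nontrivCount (ξ : Hist Ω) : ℕ :=
  ξ.countP fun s => decide (s.1 ∉ Trivials Ω)

end

noncomputable section BranchRepAux
namespace BranchRep

set_option linter.unusedSectionVars false

variable {Ω : Type*} [Fintype Ω] [Nonempty Ω]

/-- uniform belief, used as a junk default -/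
def unif : Belief Ω :=
  ⟨fun _ => (Fintype.card Ω : ℝ)⁻¹,
   fun _ => by positivity,
   by
     rw [Finset.sum_const, Finset.card_univ, nsmul_eq_mul]
     exact mul_inv_cancel₀ (by exact_mod_cast Fintype.card_ne_zero)⟩

lemma tau_nonempty (e : SPExp Ω) : e.tau.Nonempty := by
  by_contra hne
  rw [Finset.not_nonempty_iff_eq_empty] at hne
  have := e.sum_one
  rw [show e.w.support = e.tau from rfl, hne] at this
  simp at this

/-- the support of e as a list -/
def L (e : SPExp Ω) : List (Belief Ω) := e.tau.toList

lemma L_len (e : SPExp Ω) : (L e).length = e.tau.card := Finset.length_toList _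

lemma L_pos (e : SPExp Ω) : 0 < (L e).length := by
  rw [L_len]; exact Finset.card_pos.2 (tau_nonempty e)

/-- the posterior assigned to child j -/
def post (e : SPExp Ω) (j : ℕ) : Belief Ω :=
  (L e).getD (min j ((L e).length - 1)) unif

lemma min_lt (e : SPExp Ω) (j : ℕ) : min j ((L e).length - 1) < (L e).length := by
  have := L_pos e; omega

lemma post_def (e : SPExp Ω) (j : ℕ) :
    post e j = (L e).get ⟨min j ((L e).length - 1), min_lt e j⟩ :=
  List.getD_eq_get (L e) unif ⟨min j ((L e).length - 1), min_lt e j⟩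

lemma post_mem (e : SPExp Ω) (j : ℕ) : post e j ∈ e.tau := by
  rw [post_def]
  exact Finset.mem_toList.1 ((L e).get_mem _)

lemma post_of_lt (e : SPExp Ω) {j : ℕ} (hj : j < (L e).length) :
    post e j = (L e).get ⟨j, hj⟩ := by
  rw [post_def]
  have : min j ((L e).length - 1) = j := by omega
  simp_rw [this]

/-- the weight assigned to child j -/
def wgt (e : SPExp Ω) (j : ℕ) : ℝ :=
  if j < (L e).length then e.w (post e j) else 0

lemma wgt_nonneg (e : SPExp Ω) (j : ℕ) : 0 ≤ wgt e j := by
  unfold wgt; split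
  · exact e.nonneg _
  · exact le_refl 0

lemma L_nodup (e : SPExp Ω) : (L e).Nodup := Finset.nodup_toList _

lemma post_indexOf (e : SPExp Ω) {p : Belief Ω} (hp : p ∈ e.tau) :
    post e ((L e).idxOf p) = p := by
  have hm : p ∈ L e := Finset.mem_toList.2 hp
  have hidx : (L e).idxOf p < (L e).length := List.idxOf_lt_length_iff.2 hm
  rw [post_of_lt e hidx]
  exact List.idxOf_get _

lemma key (e : SPExp Ω) {h : ℕ} (hc : e.tau.card ≤ h) (p : Belief Ω) :
    ∑ j : Fin h, (if post e j.val = p then wgt e j.val else 0) = e.w p := by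
  by_cases hp : p ∈ e.tau
  · have hm : p ∈ L e := Finset.mem_toList.2 hp
    have hidx : (L e).idxOf p < (L e).length := List.idxOf_lt_length_iff.2 hm
    have hih : (L e).idxOf p < h := lt_of_lt_of_le hidx (by rw [L_len]; exact hc)
    have hterm : ∀ j : Fin h, (if post e j.val = p then wgt e j.val else 0)
        = if j = ⟨(L e).idxOf p, hih⟩ then e.w p else 0 := by
      intro j
      by_cases hj : j = ⟨(L e).idxOf p, hih⟩
      · subst hj
        simp only [post_indexOf e hp, if_pos rfl, wgt, if_pos hidx, post_indexOf e hp]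
      · rw [if_neg hj]
        by_cases hjl : j.val < (L e).length
        · rw [if_neg]
          intro hpost
          rw [post_of_lt e hjl] at hpost
          apply hj
          have := List.nodup_iff_injective_get.1 (L_nodup e)
            (hpost.trans (List.idxOf_get hidx).symm)
          exact Fin.ext (show j.val = (L e).idxOf p from congrArg Fin.val this)
        · simp only [wgt, if_neg hjl, ite_self]
    rw [Finset.sum_congr rfl fun j _ => hterm j, Finset.sum_ite_eq' Finset.univ _ (fun _ => e.w p)]
    simp
  · have : ∀ j : Fin h, (if post e j.val = p then wgt e j.val else 0) = 0 := by
      intro j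
      rw [if_neg]
      intro hpost
      exact hp (hpost ▸ post_mem e j.val)
    rw [Finset.sum_congr rfl fun j _ => this j, Finset.sum_const, smul_zero]
    exact (Finsupp.notMem_support_iff.1 hp).symm

lemma wgt_sum (e : SPExp Ω) {h : ℕ} (hc : e.tau.card ≤ h) :
    ∑ j : Fin h, wgt e j.val = 1 := by
  have : ∀ j : Fin h, wgt e j.val
      = ∑ p ∈ e.tau, if post e j.val = p then wgt e j.val else 0 := by
    intro j
    rw [Finset.sum_ite_eq _ _ (fun _ => wgt e j.val), if_pos (post_mem e j.val)]
  rw [Finset.sum_congr rfl fun j _ => this j, Finset.sum_comm,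
    Finset.sum_congr rfl fun p _ => key e hc p]
  exact e.sum_one

section Tree

def par {h n : ℕ} (c : Fin (h ^ (n + 1))) : Fin (h ^ n) :=
  ⟨c.val / h, by
    rcases Nat.eq_zero_or_pos h with h0 | h0
    · exact absurd c.isLt (by simp [h0])
    · rw [Nat.div_lt_iff_lt_mul h0, ← pow_succ]; exact c.isLt⟩

def chi {h n : ℕ} (c : Fin (h ^ (n + 1))) : Fin h :=
  ⟨c.val % h, by
    rcases Nat.eq_zero_or_pos h with h0 | h0
    · exact absurd c.isLt (by simp [h0])
    · exact Nat.mod_lt _ h0⟩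

lemma treeChild_par_chi {h n : ℕ} (c : Fin (h ^ (n + 1))) :
    treeChild (par c) (chi c) = c :=
  Fin.ext (Nat.div_add_mod' c.val h)

lemma par_treeChild {h n : ℕ} (m : Fin (h ^ n)) (j : Fin h) :
    par (treeChild m j) = m := by
  have hpos : 0 < h := j.pos
  apply Fin.ext
  show (m.val * h + j.val) / h = m.val
  rw [mul_comm, Nat.mul_add_div hpos, Nat.div_eq_of_lt j.isLt, add_zero]

lemma chi_treeChild {h n : ℕ} (m : Fin (h ^ n)) (j : Fin h) :
    chi (treeChild m j) = j := by
  apply Fin.ext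
  show (m.val * h + j.val) % h = j.val
  rw [mul_comm, Nat.mul_add_mod, Nat.mod_eq_of_lt j.isLt]

def treeEquiv (h n : ℕ) : Fin (h ^ n) × Fin h ≃ Fin (h ^ (n + 1)) where
  toFun x := treeChild x.1 x.2
  invFun c := (par c, chi c)
  left_inv x := by
    ext
    · exact congrArg Fin.val (par_treeChild x.1 x.2)
    · exact congrArg Fin.val (chi_treeChild x.1 x.2)
  right_inv c := treeChild_par_chi c

lemma sum_children {h n : ℕ} (f : Fin (h ^ (n + 1)) → ℝ) :
    ∑ c, f c = ∑ m : Fin (h ^ n), ∑ j : Fin h, f (treeChild m j) := by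
  have h1 : ∑ x : Fin (h ^ n) × Fin h, f (treeChild x.1 x.2)
      = ∑ m : Fin (h ^ n), ∑ j : Fin h, f (treeChild m j) := Fintype.sum_prod_type _
  rw [← h1]
  exact (Fintype.sum_equiv (treeEquiv h n) _ f fun x => rfl).symm

def parIter (h : ℕ) (n : ℕ) : (l : ℕ) → Fin (h ^ (n + l)) → Fin (h ^ n)
  | 0, c => c
  | l + 1, c => parIter h n l (par c)

lemma descendant_parIter {h n : ℕ} : ∀ (l : ℕ) (c : Fin (h ^ (n + l))),
    Descendant l (parIter h n l c) c
  | 0, c => rfl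
  | l + 1, c => ⟨par c, chi c, descendant_parIter l (par c), (treeChild_par_chi c).symm⟩

end Tree

section Node

variable {F : Set (SPExp Ω)} {μ : Belief Ω}

def node (S : SeqP F μ) (h : ℕ) : (n : ℕ) → Fin (h ^ n) → Hist Ω × ℝ
  | 0, _ => ([], 1)
  | n + 1, c =>
    ((S.next (node S h n (par c)).1,
      post (S.next (node S h n (par c)).1) (chi c).val) :: (node S h n (par c)).1,
     (node S h n (par c)).2 * wgt (S.next (node S h n (par c)).1) (chi c).val)

variable (S : SeqP F μ) (h : ℕ)

lemma node_succ (n : ℕ) (c : Fin (h ^ (n + 1))) :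
    node S h (n + 1) c =
    ((S.next (node S h n (par c)).1,
      post (S.next (node S h n (par c)).1) (chi c).val) :: (node S h n (par c)).1,
     (node S h n (par c)).2 * wgt (S.next (node S h n (par c)).1) (chi c).val) := rfl

lemma node_mem : ∀ (n : ℕ) (c : Fin (h ^ n)), (node S h n c).1 ∈ Hists S n
  | 0, _ => rfl
  | n + 1, c =>
    ⟨(node S h n (par c)).1, node_mem n (par c), post (S.next (node S h n (par c)).1) (chi c).val,
      post_mem _ _, rfl⟩

lemma node_nonneg : ∀ (n : ℕ) (c : Fin (h ^ n)), 0 ≤ (node S h n c).2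
  | 0, _ => zero_le_one
  | n + 1, c => mul_nonneg (node_nonneg n (par c)) (wgt_nonneg _ _)

lemma node_sum (hcard : ∀ e ∈ F, e.tau.card ≤ h) :
    ∀ n : ℕ, ∑ c : Fin (h ^ n), (node S h n c).2 = 1
  | 0 => by simp [node]; rfl
  | n + 1 => by
    rw [sum_children]
    have : ∀ m : Fin (h ^ n), ∑ j : Fin h, (node S h (n + 1) (treeChild m j)).2
        = (node S h n m).2 := by
      intro m
      simp only [node_succ, par_treeChild, chi_treeChild]
      rw [← Finset.mul_sum, wgt_sum _ (hcard _ (S.feasible _)), mul_one]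
    rw [Finset.sum_congr rfl fun m _ => this m]
    exact node_sum hcard n

lemma node_surj (hcard : ∀ e ∈ F, e.tau.card ≤ h) :
    ∀ n : ℕ, ∀ ξ ∈ Hists S n, ∃ c : Fin (h ^ n), (node S h n c).1 = ξ := by
  intro n
  induction n with
  | zero => intro ξ hξ; exact ⟨⟨0, by simp⟩, hξ.symm⟩
  | succ n ih =>
    rintro ξ' ⟨ξ, hξ, p, hp, rfl⟩
    obtain ⟨c, hc⟩ := ih ξ hξ
    have hidx : (L (S.next ξ)).idxOf p < h :=
      lt_of_lt_of_le (List.idxOf_lt_length_iff.2 (Finset.mem_toList.2 hp))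
        (by rw [L_len]; exact hcard _ (S.feasible _))
    refine ⟨treeChild c ⟨_, hidx⟩, ?_⟩
    rw [node_succ]
    simp only [par_treeChild, chi_treeChild, hc]
    rw [post_indexOf _ hp]

lemma suffix_of_descendant (n : ℕ) :
    ∀ (l : ℕ) (c : Fin (h ^ n)) (c' : Fin (h ^ (n + l))), Descendant l c c' →
      (node S h n c).1 <:+ (node S h (n + l) c').1 := by
  intro l
  induction l with
  | zero =>
    intro c c' hd
    rw [show c = c' from hd]
    exact List.suffix_refl _
  | succ l ih =>
    rintro c c' ⟨c'', j, hd, rfl⟩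
    refine (ih c c'' hd).trans ?_
    rw [show node S h (n + (l + 1)) (treeChild c'' j) = _ from node_succ S h (n + l) (treeChild c'' j)]
    simp only [par_treeChild, chi_treeChild]
    exact List.suffix_cons _ _

lemma hists_length : ∀ n : ℕ, ∀ ξ ∈ Hists S n, ξ.length = n := by
  intro n
  induction n with
  | zero => intro ξ hξ; rw [show ξ = [] from hξ]; rfl
  | succ n ih => rintro ξ' ⟨ξ, hξ, p, hp, rfl⟩; simp [ih ξ hξ]

lemma suffix_eq_of_length {α : Type*} {s t u : List α} (h1 : s <:+ u) (h2 : t <:+ u)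
    (hl : s.length = t.length) : s = t := by
  rcases List.suffix_or_suffix_of_suffix h1 h2 with hs | hs
  · exact hs.eq_of_length hl
  · exact (hs.eq_of_length hl.symm).symm

lemma node_histProb (hcard : ∀ e ∈ F, e.tau.card ≤ h) :
    ∀ n : ℕ, ∀ ξ ∈ Hists S n,
      histProb ξ = ∑ c : Fin (h ^ n), if (node S h n c).1 = ξ then (node S h n c).2 else 0 := by
  intro n
  induction n with
  | zero =>
    intro ξ hξ
    rw [show ξ = [] from hξ]
    simp [node, histProb]
    exact_mod_cast (rfl : (Finset.univ : Finset (Fin (h ^ 0))).card = 1).symm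
  | succ n ih =>
    rintro ξ' ⟨ξ, hξ, p, hp, rfl⟩
    rw [sum_children]
    have hinner : ∀ m : Fin (h ^ n),
        (∑ j : Fin h, if (node S h (n + 1) (treeChild m j)).1 = (S.next ξ, p) :: ξ
          then (node S h (n + 1) (treeChild m j)).2 else 0)
        = if (node S h n m).1 = ξ then (node S h n m).2 * (S.next ξ).w p else 0 := by
      intro m
      simp only [node_succ, par_treeChild, chi_treeChild]
      by_cases hm : (node S h n m).1 = ξ
      · rw [if_pos hm]
        simp only [hm, List.cons.injEq, Prod.mk.injEq, true_and, and_true]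
        rw [← key (S.next ξ) (hcard _ (S.feasible _)) p, Finset.mul_sum]
        refine Finset.sum_congr rfl fun j _ => ?_
        by_cases hj : post (S.next ξ) j.val = p
        · rw [if_pos hj, if_pos hj]
        · rw [if_neg hj, if_neg hj, mul_zero]
      · rw [if_neg hm]
        refine Finset.sum_eq_zero fun j _ => ?_
        rw [if_neg]
        intro hcontra
        exact hm (List.tail_eq_of_cons_eq hcontra)
    rw [Finset.sum_congr rfl fun m _ => hinner m]
    have : histProb ((S.next ξ, p) :: ξ) = (S.next ξ).w p * histProb ξ := rfl
    rw [this, ih ξ hξ, Finset.mul_sum]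
    refine Finset.sum_congr rfl fun m _ => ?_
    by_cases hm : (node S h n m).1 = ξ
    · rw [if_pos hm, if_pos hm]; ring
    · rw [if_neg hm, if_neg hm, mul_zero]

end Node

end BranchRep
end BranchRepAux

/-- Lemma 8 (lem-branch-represent): under Assumption 1, every infinite sequential
persuasion is represented by an h-branching sequential persuasion. -/
theorem lem_branch_represent {Ω : Type*} [Fintype Ω] [Nonempty Ω]
    (F : Set (SPExp Ω)) (hTF : Trivials Ω ⊆ F)
    (h : ℕ) (hA1 : Assumption1 F h)
    (μ : Belief Ω) (S : SeqP F μ) :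
    ∃ B : HBranch Ω F h μ, Represents S B := by
  classical
  obtain ⟨hcard, -⟩ := hA1
  refine ⟨{
    π := fun n c => (BranchRep.node S h n c).2
    β := fun n c => lastBelief μ (BranchRep.node S h n c).1
    η := fun n c => S.next (BranchRep.node S h n c).1
    π_nonneg := fun n c => BranchRep.node_nonneg S h n c
    π_sum := BranchRep.node_sum S h hcard
    η_mem := fun n c => S.feasible _
    β_root := fun m => rfl
    compat_sigma := fun n c => S.bayes _
    compat_tau := ?_
    consistent := ?_ }, ?_⟩
  · -- compat_tau
    intro n m p hp
    have hidx : (BranchRep.L (S.next (BranchRep.node S h n m).1)).idxOf p < h :=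
      lt_of_lt_of_le (List.idxOf_lt_length_iff.2 (Finset.mem_toList.2 hp))
        (by rw [BranchRep.L_len]; exact hcard _ (S.feasible _))
    refine ⟨⟨_, hidx⟩, ?_⟩
    show lastBelief μ (BranchRep.node S h (n + 1) (treeChild m ⟨_, hidx⟩)).1 = p
    rw [BranchRep.node_succ]
    simp only [BranchRep.par_treeChild, BranchRep.chi_treeChild, lastBelief]
    exact BranchRep.post_indexOf _ hp
  · -- consistent
    intro n m p
    show (∑ j : Fin h, if lastBelief μ (BranchRep.node S h (n + 1) (treeChild m j)).1 = p
        then (BranchRep.node S h (n + 1) (treeChild m j)).2 else 0)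
      = (BranchRep.node S h n m).2 * (S.next (BranchRep.node S h n m).1).w p
    simp only [BranchRep.node_succ, BranchRep.par_treeChild, BranchRep.chi_treeChild, lastBelief]
    rw [← BranchRep.key (S.next (BranchRep.node S h n m).1) (hcard _ (S.feasible _)) p,
      Finset.mul_sum]
    refine Finset.sum_congr rfl fun j _ => ?_
    by_cases hj : BranchRep.post (S.next (BranchRep.node S h n m).1) j.val = p
    · rw [if_pos hj, if_pos hj]
    · rw [if_neg hj, if_neg hj, mul_zero]
  · -- Represents
    refine ⟨fun n c => (BranchRep.node S h n c).1, fun n =>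
      ⟨fun c => BranchRep.node_mem S h n c, BranchRep.node_histProb S h hcard n,
        fun c => ⟨rfl, rfl⟩, ?_⟩⟩
    intro l ξ hξ ξ' hξ'
    constructor
    · intro hsuf c' hc'
      replace hc' : (BranchRep.node S h (n + l) c').1 = ξ' := hc'
      refine ⟨BranchRep.parIter h n l c', ?_, BranchRep.descendant_parIter l c'⟩
      show (BranchRep.node S h n (BranchRep.parIter h n l c')).1 = ξ
      have h1 := BranchRep.suffix_of_descendant S h n l (BranchRep.parIter h n l c') c'
        (BranchRep.descendant_parIter l c')
      rw [hc'] at h1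
      refine BranchRep.suffix_eq_of_length h1 hsuf ?_
      rw [BranchRep.hists_length (S := S) n _ (BranchRep.node_mem S h n _),
        BranchRep.hists_length (S := S) n ξ hξ]
    · intro hr
      obtain ⟨c', hc'⟩ := BranchRep.node_surj S h hcard (n + l) ξ' hξ'
      obtain ⟨c, hc, hd⟩ := hr c' hc'
      replace hc : (BranchRep.node S h n c).1 = ξ := hc
      have h1 := BranchRep.suffix_of_descendant S h n l c c' hd
      rwa [hc, hc'] at h1
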